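/- If lim_{n→∞} n^p · σ_n² = ∞ for some p > 0, then Var(R_n) = σ_n² · (1 + o(1)) as n → ∞, i.e. Var(R_n)/σ_n² → 1. -/

import Mathlib

open MeasureTheory ProbabilityTheory Filter Topology

open scoped ENNReal


namespace VarRange

lemma pow_sub_pow_le {y z : ℝ} (n : ℕ) (h0 : 0 ≤ z) (h1 : z ≤ y) (h2 : y ≤ 1) :
    y^n - z^n ≤ n * (y - z) * y^(n-1) := by
  induction n with
  | zero => simp
  | succ m ih =>
      have hy0 : 0 ≤ y := le_trans h0 h1
      have hzy : z^m ≤ y^m := pow_le_pow_left₀ h0 h1 m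
      have hym : y^m ≤ 1 := pow_le_one₀ hy0 h2
      have h3 : y^(m+1) - z^(m+1) = y * (y^m - z^m) + (y - z) * z^m := by ring
      simp only [Nat.add_sub_cancel] at *
      push_cast
      rcases Nat.eq_zero_or_pos m with hm | hm
      · subst hm; simp
      · have h4 : y^(m-1) * y = y ^ m := by
          rw [← pow_succ]; congr 1; omega
        have h5 : y * ((m:ℝ) * (y-z) * y^(m-1)) = (m:ℝ) * (y-z) * y^m := by
          rw [mul_comm y _, mul_assoc, h4]
        nlinarith [pow_nonneg h0 m, pow_nonneg hy0 m, mul_le_mul_of_nonneg_left ih hy0]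

lemma tsum_subtype_le_tsum {α : Type*} {f : α → ℝ} (hf : Summable f) (h0 : ∀ x, 0 ≤ f x)
    (s : Set α) : ∑' (x : s), f x ≤ ∑' x, f x := by
  rw [tsum_subtype]
  exact Summable.tsum_le_tsum (fun a => Set.indicator_le_self' (fun y _ => h0 y) a) (hf.indicator s) hf

def hitSet {Ω : Type*} (ξ : ℕ → Ω → ℕ) (n : ℕ) (i : ℕ) : Set Ω :=
  ⋃ k ∈ Finset.range n, (ξ k) ⁻¹' {i}

section prob
variable {Ω : Type*} [MeasurableSpace Ω] (P : Measure Ω) [IsProbabilityMeasure P]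
  (π : ℕ → ℝ) (ξ : ℕ → Ω → ℕ)

set_option maxHeartbeats 1000000 in
lemma var_eq
    (hπpos : ∀ i, 0 < π i) (hπsum : HasSum π 1)
    (hξmeas : ∀ k, Measurable (ξ k))
    (hξindep : iIndepFun ξ P)
    (hξlaw : ∀ k i, P {ω | ξ k ω = i} = ENNReal.ofReal (π i))
    (n : ℕ) :
    ∃ D : ℝ, 0 ≤ D ∧
      D ≤ Real.exp 2 * n * (∑' i, π i * Real.exp (-(n:ℝ) * π i))^2 ∧
      variance (fun ω => ((((Finset.range n).image fun k => ξ k ω).card : ℕ) : ℝ)) P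
        = (∑' i, ((1 - π i)^n * (1 - (1 - π i)^n))) - D := by
  classical
  set a : ℕ → ℝ := fun i => (1 - π i)^n with ha
  have hq1 : ∀ i, π i ≤ 1 := fun i => le_hasSum hπsum i (fun j _ => (hπpos j).le)
  have hq2 : ∀ i j, i ≠ j → π i + π j ≤ 1 := by
    intro i j hij
    have := sum_le_hasSum {i, j} (fun a _ => (hπpos a).le) hπsum
    rwa [Finset.sum_pair hij] at this
  have ha0 : ∀ i, 0 ≤ a i := fun i => pow_nonneg (by linarith [hq1 i]) n
  have ha1 : ∀ i, a i ≤ 1 := fun i => pow_le_one₀ (by linarith [hq1 i]) (by linarith [hπpos i])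
  set I : ℕ → Set Ω := fun i => hitSet ξ n i with hI
  have hImeas : ∀ i, MeasurableSet (I i) := fun i =>
    MeasurableSet.biUnion (Finset.range n).countable_toSet
      (fun k _ => (hξmeas k) (measurableSet_singleton i))
  -- independence product
  have hind : ∀ (S : Set ℕ),
      P (⋂ k ∈ Finset.range n, (ξ k) ⁻¹' S) = ∏ k ∈ Finset.range n, P ((ξ k) ⁻¹' S) :=
    fun S => hξindep.measure_inter_preimage_eq_mul (Finset.range n) (sets := fun _ => S)
      (fun _ _ => trivial)
  have hone : ∀ k i, P ((ξ k) ⁻¹' {i}) = ENNReal.ofReal (π i) := by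
    intro k i; rw [← hξlaw k i]; rfl
  -- single complement law
  have hcompl1 : ∀ k i, P ((ξ k) ⁻¹' ({i}ᶜ)) = ENNReal.ofReal (1 - π i) := by
    intro k i
    rw [Set.preimage_compl, prob_compl_eq_one_sub ((hξmeas k) (measurableSet_singleton i)),
      hone k i, ENNReal.ofReal_sub 1 (hπpos i).le]
    simp
  have hcompl2 : ∀ k i j, i ≠ j →
      P ((ξ k) ⁻¹' (({i} ∪ {j} : Set ℕ)ᶜ)) = ENNReal.ofReal (1 - π i - π j) := by
    intro k i j hij
    have hd : Disjoint ((ξ k) ⁻¹' {i}) ((ξ k) ⁻¹' {j}) :=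
      Set.disjoint_singleton.2 hij |>.preimage _
    have hum : MeasurableSet ((ξ k) ⁻¹' ({i} ∪ {j})) := (hξmeas k) trivial
    rw [Set.preimage_compl, prob_compl_eq_one_sub hum, Set.preimage_union,
      measure_union hd ((hξmeas k) trivial), hone k i, hone k j,
      ← ENNReal.ofReal_add (hπpos i).le (hπpos j).le]
    rw [show (1:ℝ≥0∞) = ENNReal.ofReal 1 by simp,
      ← ENNReal.ofReal_sub 1 (by linarith [(hπpos i).le, (hπpos j).le])]
    ring_nf
  -- measure of hit set complements
  have hIc : ∀ i, P ((I i)ᶜ) = ENNReal.ofReal (a i) := by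
    intro i
    have : (I i)ᶜ = ⋂ k ∈ Finset.range n, (ξ k) ⁻¹' ({i}ᶜ) := by
      simp [hI, hitSet, Set.compl_iUnion]
    rw [this, hind ({i}ᶜ)]
    simp_rw [fun k => hcompl1 k i]
    rw [Finset.prod_const, Finset.card_range, ← ENNReal.ofReal_pow (by linarith [hq1 i])]
  have hIuc : ∀ i j, i ≠ j → P ((I i ∪ I j)ᶜ) = ENNReal.ofReal ((1 - π i - π j)^n) := by
    intro i j hij
    have : (I i ∪ I j)ᶜ = ⋂ k ∈ Finset.range n, (ξ k) ⁻¹' (({i} ∪ {j} : Set ℕ)ᶜ) := by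
      simp only [hI, hitSet, Set.compl_union, Set.compl_iUnion, Set.preimage_compl,
        ← Set.iInter_inter_distrib]
      exact Set.iInter₂_congr (fun k _ => by ext ω; simp)
    rw [this, hind, Finset.prod_congr rfl (fun k _ => hcompl2 k i j hij),
      Finset.prod_const, Finset.card_range,
      ← ENNReal.ofReal_pow (by linarith [hq2 i j hij, (hπpos j).le])]
  -- real valued measures
  set v : ℕ → ℝ := fun i => 1 - a i with hv
  have hvi : ∀ i, (P (I i)).toReal = v i := by
    intro i
    have h := measure_add_measure_compl (μ := P) (hImeas i)
    rw [hIc i] at h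
    have := congrArg ENNReal.toReal h
    rw [ENNReal.toReal_add (measure_ne_top P _) ENNReal.ofReal_ne_top,
      ENNReal.toReal_ofReal (ha0 i)] at this
    simp only [measure_univ, ENNReal.toReal_one] at this
    simp only [hv]; linarith
  have hwij : ∀ i j, i ≠ j →
      (P (I i ∩ I j)).toReal = 1 - a i - a j + (1 - π i - π j)^n := by
    intro i j hij
    have hu := measure_union_add_inter (μ := P) (I i) (hImeas j)
    have huc : (P (I i ∪ I j)).toReal = 1 - (1 - π i - π j)^n := by
      have h := measure_add_measure_compl (μ := P) ((hImeas i).union (hImeas j))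
      rw [hIuc i j hij] at h
      have := congrArg ENNReal.toReal h
      rw [ENNReal.toReal_add (measure_ne_top P _) ENNReal.ofReal_ne_top,
        ENNReal.toReal_ofReal (pow_nonneg (by linarith [hq2 i j hij, (hπpos j).le]) n)] at this
      simp only [measure_univ, ENNReal.toReal_one] at this
      linarith
    have := congrArg ENNReal.toReal hu
    rw [ENNReal.toReal_add (measure_ne_top P _) (measure_ne_top P _),
      ENNReal.toReal_add (measure_ne_top P _) (measure_ne_top P _), huc,
      hvi i, hvi j] at this
    simp only [hv] at this ⊢
    linarith
  -- counting function
  have hcard : ∀ ω : Ω, ((((Finset.range n).image fun k => ξ k ω).card : ℕ) : ℝ≥0∞)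
      = ∑' i, (I i).indicator (1 : Ω → ℝ≥0∞) ω := by
    intro ω
    set s := (Finset.range n).image fun k => ξ k ω with hs
    have hmem : ∀ i, ω ∈ I i ↔ i ∈ s := by
      intro i
      simp [hI, hitSet, hs, Finset.mem_image, eq_comm]
    have hh : ∀ i, (I i).indicator (1 : Ω → ℝ≥0∞) ω = if i ∈ s then 1 else 0 := by
      intro i
      by_cases h : i ∈ s
      · rw [Set.indicator_of_mem ((hmem i).2 h)]; simp [h]
      · rw [Set.indicator_of_notMem (fun hc => h ((hmem i).1 hc))]; simp [h]
    rw [tsum_congr hh, tsum_eq_sum (s := s) (fun i h => if_neg h)]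
    simp
  set F : Ω → ℕ := fun ω => ((Finset.range n).image fun k => ξ k ω).card with hF
  have hFbound : ∀ ω, F ω ≤ n := fun ω =>
    le_trans Finset.card_image_le (le_of_eq (Finset.card_range n))
  have hFmeas : Measurable F := by
    have hG : Measurable (fun ω (k : Fin n) => ξ k ω) :=
      measurable_pi_lambda _ (fun k => hξmeas k)
    have hH : Measurable (fun v : Fin n → ℕ => (Finset.univ.image v).card) :=
      measurable_of_countable _
    have hFc : F = (fun v : Fin n → ℕ => (Finset.univ.image v).card) ∘ (fun ω k => ξ k ω) := by
      funext ω
      simp only [Function.comp_apply, hF]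
      congr 1
      ext i
      simp only [Finset.mem_image, Finset.mem_range, Finset.mem_univ, true_and]
      constructor
      · rintro ⟨k, hk, hki⟩; exact ⟨⟨k, hk⟩, hki⟩
      · rintro ⟨k, hki⟩; exact ⟨k.1, k.2, hki⟩
    rw [hFc]; exact hH.comp hG
  -- moments
  have hm1 : ∫⁻ ω, (F ω : ℝ≥0∞) ∂P = ∑' i, P (I i) := by
    rw [lintegral_congr hcard,
      lintegral_tsum (fun i => ((measurable_one).indicator (hImeas i)).aemeasurable)]
    simp_rw [lintegral_indicator_one (hImeas _)]
  have hm2 : ∫⁻ ω, ((F ω : ℝ≥0∞))^2 ∂P = ∑' pr : ℕ × ℕ, P (I pr.1 ∩ I pr.2) := by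
    have hptwise : ∀ ω, ((F ω : ℝ≥0∞))^2
        = ∑' pr : ℕ × ℕ, ((I pr.1 ∩ I pr.2).indicator (1 : Ω → ℝ≥0∞)) ω := by
      intro ω
      have hmul : ∀ i j, (I i).indicator (1 : Ω → ℝ≥0∞) ω * (I j).indicator (1 : Ω → ℝ≥0∞) ω
          = ((I i ∩ I j).indicator (1 : Ω → ℝ≥0∞)) ω := by
        intro i j
        by_cases h1 : ω ∈ I i <;> by_cases h2 : ω ∈ I j <;>
          simp [Set.indicator_apply, h1, h2]
      rw [pow_two, hcard ω, ← ENNReal.tsum_mul_right, ENNReal.tsum_prod']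
      exact tsum_congr fun i => by
        rw [← ENNReal.tsum_mul_left]; exact tsum_congr fun j => hmul i j
    have hmeas2 : ∀ pr : ℕ × ℕ, AEMeasurable ((I pr.1 ∩ I pr.2).indicator (1 : Ω → ℝ≥0∞)) P :=
      fun pr => ((measurable_one).indicator ((hImeas pr.1).inter (hImeas pr.2))).aemeasurable
    rw [lintegral_congr hptwise, lintegral_tsum hmeas2]
    simp_rw [lintegral_indicator_one ((hImeas _).inter (hImeas _))]
  have hm1fin : (∑' i, P (I i)) ≠ ⊤ := by
    rw [← hm1]
    have h2 : ∫⁻ ω, (F ω : ℝ≥0∞) ∂P ≤ (n : ℝ≥0∞) := by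
      calc ∫⁻ ω, (F ω : ℝ≥0∞) ∂P ≤ ∫⁻ _, (n : ℝ≥0∞) ∂P :=
            lintegral_mono (fun ω => by exact Nat.cast_le.2 (hFbound ω))
        _ = (n : ℝ≥0∞) := by simp
    exact ne_top_of_le_ne_top (ENNReal.natCast_ne_top n) h2
  have hm2fin : (∑' pr : ℕ × ℕ, P (I pr.1 ∩ I pr.2)) ≠ ⊤ := by
    rw [← hm2]
    have h2 : ∫⁻ ω, ((F ω : ℝ≥0∞))^2 ∂P ≤ ((n : ℝ≥0∞))^2 := by
      calc ∫⁻ ω, ((F ω : ℝ≥0∞))^2 ∂P ≤ ∫⁻ _, ((n : ℝ≥0∞))^2 ∂P := by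
            refine lintegral_mono (fun ω => ?_)
            exact pow_le_pow_left' (by exact_mod_cast hFbound ω) 2
        _ = ((n : ℝ≥0∞))^2 := by simp
    exact ne_top_of_le_ne_top (by simp [ENNReal.pow_ne_top, ENNReal.natCast_ne_top]) h2
  -- real integrals
  set X : Ω → ℝ := fun ω => (F ω : ℝ) with hX
  have hXmeas : Measurable X := (measurable_of_countable (fun m : ℕ => (m : ℝ))).comp hFmeas
  have hXsm : AEStronglyMeasurable X P := hXmeas.aestronglyMeasurable
  have hMem : MemLp X 2 P := by
    refine MemLp.of_bound hXsm (n : ℝ) (Filter.Eventually.of_forall (fun ω => ?_))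
    rw [hX]
    simp only [Real.norm_natCast]
    exact_mod_cast hFbound ω
  have hEX : ∫ ω, X ω ∂P = (∑' i, P (I i)).toReal := by
    rw [integral_eq_lintegral_of_nonneg_ae
      (Filter.Eventually.of_forall (fun ω => Nat.cast_nonneg _)) hXsm, ← hm1]
    congr 1
    exact lintegral_congr (fun ω => ENNReal.ofReal_natCast _)
  have hEX2 : ∫ ω, (X ω)^2 ∂P = (∑' pr : ℕ × ℕ, P (I pr.1 ∩ I pr.2)).toReal := by
    rw [integral_eq_lintegral_of_nonneg_ae
      (Filter.Eventually.of_forall (fun ω => sq_nonneg _))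
      ((hXmeas.pow_const 2).aestronglyMeasurable), ← hm2]
    congr 1
    refine lintegral_congr (fun ω => ?_)
    rw [ENNReal.ofReal_pow (Nat.cast_nonneg _), ENNReal.ofReal_natCast]
  set w : ℕ × ℕ → ℝ := fun pr => (P (I pr.1 ∩ I pr.2)).toReal with hwdef
  have hVv : ∫ ω, X ω ∂P = ∑' i, v i := by
    rw [hEX, ENNReal.tsum_toReal_eq (fun i => measure_ne_top P _)]
    exact tsum_congr hvi
  have hVw : ∫ ω, (X ω)^2 ∂P = ∑' pr, w pr := by
    rw [hEX2, ENNReal.tsum_toReal_eq (fun pr => measure_ne_top P _)]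
  have hsumw : Summable w := ENNReal.summable_toReal hm2fin
  have hsumv : Summable v := by
    refine (ENNReal.summable_toReal hm1fin).congr (fun i => hvi i)
  have hv0 : ∀ i, 0 ≤ v i := fun i => by rw [← hvi i]; exact ENNReal.toReal_nonneg
  have hsumvv : Summable (fun pr : ℕ × ℕ => v pr.1 * v pr.2) :=
    hsumv.mul_of_nonneg hsumv hv0 hv0
  have hprodv : (∑' pr : ℕ × ℕ, v pr.1 * v pr.2) = (∑' i, v i)^2 := by
    rw [Summable.tsum_prod' hsumvv (fun b => hsumvv.prod_factor b)]
    simp_rw [tsum_mul_left]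
    rw [tsum_mul_right, sq]
  have hvar : variance X P = ∑' pr : ℕ × ℕ, (w pr - v pr.1 * v pr.2) := by
    have hvd := variance_eq_sub hMem
    have hfix1 : P[X^2] = ∫ ω, (X ω)^2 ∂P := by
      apply integral_congr_ae
      filter_upwards with ω
      simp [Pi.pow_apply]
    have hfix2 : P[X] = ∫ ω, X ω ∂P := rfl
    rw [hvd, hfix1, hfix2, hVw, hVv, ← hprodv, Summable.tsum_sub hsumw hsumvv]
  -- diagonal / off-diagonal split
  set Dg : Set (ℕ × ℕ) := {pr | pr.1 = pr.2} with hDg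
  set dfn : ℕ × ℕ → ℝ := fun pr => w pr - v pr.1 * v pr.2 with hdfn
  have hsumd : Summable dfn := hsumw.sub hsumvv
  have hsplit := Summable.tsum_add_tsum_compl (f := dfn) (s := Dg) (hsumd.subtype Dg) (hsumd.subtype ↑Dgᶜ)
  have hdiag : ∑' (x : Dg), dfn x = ∑' i, ((1 - π i)^n * (1 - (1 - π i)^n)) := by
    let e : ℕ ≃ Dg :=
      ⟨fun i => ⟨(i, i), rfl⟩, fun x => x.1.1, fun i => rfl,
        fun x => Subtype.ext (by rcases x with ⟨⟨i, j⟩, (h : i = j)⟩; subst h; rfl)⟩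
    rw [← e.tsum_eq]
    refine tsum_congr (fun i => ?_)
    have hwii : w (i, i) = v i := by
      rw [hwdef]; simp only [Set.inter_self]; exact hvi i
    show dfn (i, i) = (1 - π i)^n * (1 - (1 - π i)^n)
    rw [hdfn]
    simp only [hwii, hv, ha]
    ring
  -- off-diagonal bounds
  set g : ℕ → ℝ := fun i => π i * Real.exp (-(n:ℝ) * π i) with hg
  have hg0 : ∀ i, 0 ≤ g i := fun i => mul_nonneg (hπpos i).le (Real.exp_pos _).le
  have hexpfac : ∀ i : ℕ, (1 - π i)^(n-1) ≤ Real.exp 1 * Real.exp (-(n:ℝ) * π i) := by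
    intro i
    rcases Nat.eq_zero_or_pos n with hn | hn
    · subst hn
      simp only [Nat.zero_sub, pow_zero]
      rw [← Real.exp_add]
      refine Real.one_le_exp ?_
      push_cast
      nlinarith [hπpos i, hq1 i]
    · have h1 : (1 - π i)^(n-1) ≤ Real.exp (-π i)^(n-1) := by
        refine pow_le_pow_left₀ (by linarith [hq1 i]) ?_ _
        nlinarith [Real.add_one_le_exp (-π i)]
      refine le_trans h1 ?_
      rw [← Real.exp_nat_mul, ← Real.exp_add]
      refine Real.exp_le_exp.2 ?_
      rw [Nat.cast_sub hn]
      push_cast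
      nlinarith [hπpos i, hq1 i]
  have hoff : ∀ pr : ℕ × ℕ, pr.1 ≠ pr.2 →
      0 ≤ -dfn pr ∧ -dfn pr ≤ Real.exp 2 * n * (g pr.1 * g pr.2) := by
    rintro ⟨i, j⟩ hij
    have hwv : w (i, j) = 1 - a i - a j + (1 - π i - π j)^n := hwij i j hij
    have hterm : -dfn (i, j) = a i * a j - (1 - π i - π j)^n := by
      rw [hdfn]
      simp only [hwv, hv]
      ring
    set y : ℝ := (1 - π i) * (1 - π j) with hy
    set z : ℝ := 1 - π i - π j with hz
    have hz0 : 0 ≤ z := by rw [hz]; linarith [hq2 i j hij]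
    have hzy : z ≤ y := by rw [hy, hz]; nlinarith [(hπpos i).le, (hπpos j).le]
    have hy1 : y ≤ 1 := by
      rw [hy]
      nlinarith [hq1 i, hq1 j, (hπpos i).le, (hπpos j).le]
    have haa : a i * a j = y^n := by rw [ha, hy, mul_pow]
    constructor
    · rw [hterm, haa, hz]
      have := pow_le_pow_left₀ hz0 hzy n
      linarith
    · rw [hterm, haa, hz]
      have hkey := pow_sub_pow_le (y := y) (z := z) n hz0 hzy hy1
      have hyz : y - z = π i * π j := by rw [hy, hz]; ring
      have hyn1 : y^(n-1) ≤ (Real.exp 1 * Real.exp (-(n:ℝ) * π i)) *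
          (Real.exp 1 * Real.exp (-(n:ℝ) * π j)) := by
        rw [hy, mul_pow]
        refine mul_le_mul (hexpfac i) (hexpfac j) (pow_nonneg (by linarith [hq1 j]) _) ?_
        positivity
      have h5 : (n:ℝ) * (y - z) * y^(n-1) ≤
          Real.exp 2 * n * (g i * g j) := by
        rw [hyz, hg]
        have hnn : (0:ℝ) ≤ (n:ℝ) * (π i * π j) :=
          mul_nonneg (Nat.cast_nonneg n) (mul_nonneg (hπpos i).le (hπpos j).le)
        calc (n:ℝ) * (π i * π j) * y^(n-1)
            ≤ (n:ℝ) * (π i * π j) * ((Real.exp 1 * Real.exp (-(n:ℝ) * π i)) *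
              (Real.exp 1 * Real.exp (-(n:ℝ) * π j))) := by
              refine mul_le_mul_of_nonneg_left hyn1 hnn
          _ = Real.exp 2 * n * (π i * Real.exp (-(n:ℝ) * π i) * (π j * Real.exp (-(n:ℝ) * π j))) := by
              rw [show Real.exp 2 = Real.exp 1 * Real.exp 1 by
                rw [← Real.exp_add]; norm_num]
              ring
      have hzz : z ^ n ≤ y ^n := pow_le_pow_left₀ hz0 hzy n
      linarith [hkey, h5]
  have hgsum : Summable g := by
    refine Summable.of_nonneg_of_le hg0 (fun i => ?_) hπsum.summable
    show π i * Real.exp (-(n:ℝ) * π i) ≤ π i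
    have hle1 : Real.exp (-(n:ℝ) * π i) ≤ 1 := by
      rw [Real.exp_le_one_iff]
      have h9 : (0:ℝ) ≤ (n:ℝ) * π i := mul_nonneg (Nat.cast_nonneg n) (hπpos i).le
      linarith
    nlinarith [hπpos i, hle1, Real.exp_pos (-(n:ℝ) * π i)]
  have hggsum : Summable (fun pr : ℕ × ℕ => g pr.1 * g pr.2) :=
    hgsum.mul_of_nonneg hgsum hg0 hg0
  have hprodg : (∑' pr : ℕ × ℕ, g pr.1 * g pr.2) = (∑' i, g i)^2 := by
    rw [Summable.tsum_prod' hggsum (fun b => hggsum.prod_factor b)]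
    simp_rw [tsum_mul_left]
    rw [tsum_mul_right, sq]
  refine ⟨-(∑' (x : ↑Dgᶜ), dfn x), ?_, ?_, ?_⟩
  · rw [← tsum_neg]
    refine tsum_nonneg (fun x => ?_)
    exact (hoff x.1 x.2).1
  · rw [← tsum_neg]
    calc ∑' (x : ↑Dgᶜ), -(dfn x)
        ≤ ∑' (x : ↑Dgᶜ), (fun pr : ℕ × ℕ => Real.exp 2 * n * (g pr.1 * g pr.2)) x := by
          refine Summable.tsum_le_tsum (fun x => (hoff x.1 x.2).2) ((hsumd.subtype _).neg)
            (((hggsum.mul_left _)).subtype _)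
      _ ≤ ∑' pr : ℕ × ℕ, Real.exp 2 * n * (g pr.1 * g pr.2) :=
          tsum_subtype_le_tsum (hggsum.mul_left _)
            (fun y => mul_nonneg (by positivity) (mul_nonneg (hg0 _) (hg0 _))) _
      _ = Real.exp 2 * n * (∑' i, g i)^2 := by
          rw [tsum_mul_left, hprodg]
  · calc variance (fun ω => ((((Finset.range n).image fun k => ξ k ω).card : ℕ) : ℝ)) P
        = ∑' pr : ℕ × ℕ, dfn pr := hvar
      _ = _ := by rw [← hsplit, hdiag]; ring

end prob

lemma one_sub_pow_le {y : ℝ} (n : ℕ) (h0 : 0 ≤ y) (h1 : y ≤ 1) : 1 - y^n ≤ n * (1 - y) := by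
  induction n with
  | zero => simp
  | succ m ih =>
      have hy : y^m ≤ 1 := pow_le_one₀ h0 h1
      have : y^(m+1) = y * y^m := by ring
      push_cast
      nlinarith [pow_nonneg h0 m]

lemma exp_term_bounds {q : ℝ} (hq0 : 0 < q) (hq1 : q ≤ 1) (n : ℕ) :
    (1-q)^n ≤ Real.exp (-(n:ℝ)*q) ∧
    Real.exp (-(n:ℝ)*q) - (1-q)^n ≤ (n:ℝ)*q^2*Real.exp (-(n:ℝ)*q) := by
  set y : ℝ := (1-q)*Real.exp q with hy
  have he1 : 1 + q ≤ Real.exp q := by nlinarith [Real.add_one_le_exp q]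
  have he2 : 1 - q ≤ Real.exp (-q) := by nlinarith [Real.add_one_le_exp (-q)]
  have hexp : Real.exp (-q) * Real.exp q = 1 := by rw [← Real.exp_add]; simp
  have hy1 : y ≤ 1 := by
    rw [hy]
    nlinarith [Real.exp_pos q]
  have hy0 : 0 ≤ y := by rw [hy]; nlinarith [Real.exp_pos q]
  have hyq : 1 - y ≤ q^2 := by rw [hy]; nlinarith
  have ha_eq : (1-q)^n = y^n * Real.exp (-(n:ℝ)*q) := by
    rw [hy, mul_pow, ← Real.exp_nat_mul, mul_assoc, ← Real.exp_add]
    have : (n:ℝ)*q + -(n:ℝ)*q = 0 := by ring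
    rw [this, Real.exp_zero, mul_one]
  have hyn1 : y^n ≤ 1 := pow_le_one₀ hy0 hy1
  have hyn0 : 0 ≤ y^n := pow_nonneg hy0 n
  constructor
  · rw [ha_eq]
    nlinarith [Real.exp_pos (-(n:ℝ)*q)]
  · rw [ha_eq]
    have hkey : 1 - y^n ≤ n * (1-y) := one_sub_pow_le n hy0 hy1
    have : Real.exp (-(n:ℝ)*q) - y^n * Real.exp (-(n:ℝ)*q)
        = Real.exp (-(n:ℝ)*q) * (1 - y^n) := by ring
    rw [this]
    have hn2 : (n:ℝ) * (1-y) ≤ (n:ℝ) * q^2 := by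
      refine mul_le_mul_of_nonneg_left hyq (Nat.cast_nonneg n)
    nlinarith [Real.exp_pos (-(n:ℝ)*q), (Real.exp_pos (-(n:ℝ)*q)).le]

lemma termB1 {q : ℝ} (hq0 : 0 < q) (hq1 : q ≤ 1) (n : ℕ) :
    |(1-q)^n * (1 - (1-q)^n) - (Real.exp (-(n:ℝ)*q) - Real.exp (-(2*(n:ℝ))*q))| ≤
      (n:ℝ)*q^2*Real.exp (-(n:ℝ)*q) := by
  obtain ⟨h1, h2⟩ := exp_term_bounds hq0 hq1 n
  set a : ℝ := (1-q)^n with ha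
  set b : ℝ := Real.exp (-(n:ℝ)*q) with hb
  have hb2 : Real.exp (-(2*(n:ℝ))*q) = b^2 := by
    rw [hb, ← Real.exp_nat_mul]
    congr 1
    push_cast
    ring
  have ha0 : 0 ≤ a := pow_nonneg (by linarith) n
  have hb1 : b ≤ 1 := by
    rw [hb, Real.exp_le_one_iff]
    nlinarith [Nat.cast_nonneg (α := ℝ) n]
  have heq : a*(1-a) - (b - b^2) = (a - b)*(1 - a - b) := by ring
  rw [hb2, heq, abs_mul]
  have e1 : |a - b| = b - a := by rw [abs_sub_comm]; exact abs_of_nonneg (by linarith)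
  have e2 : |1 - a - b| ≤ 1 := abs_le.2 ⟨by linarith, by linarith⟩
  calc |a - b| * |1 - a - b| ≤ (b - a) * 1 := by
        rw [e1]
        exact mul_le_mul_of_nonneg_left e2 (by linarith)
    _ ≤ (n:ℝ)*q^2*Real.exp (-(n:ℝ)*q) := by rw [mul_one]; exact h2

lemma termB2 {q : ℝ} (hq0 : 0 < q) {n : ℕ} (hn : 1 ≤ n) :
    q * Real.exp (-(n:ℝ)*q) ≤
      (2/(n:ℝ)) * (Real.exp (-((n:ℝ)/2)*q) - Real.exp (-(n:ℝ)*q)) := by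
  have hn0 : (0:ℝ) < n := by exact_mod_cast hn
  have hsplit : Real.exp (-((n:ℝ)/2)*q) = Real.exp (-(n:ℝ)*q) * Real.exp ((n:ℝ)*q/2) := by
    rw [← Real.exp_add]; ring_nf
  have hge : 1 + (n:ℝ)*q/2 ≤ Real.exp ((n:ℝ)*q/2) := by
    nlinarith [Real.add_one_le_exp ((n:ℝ)*q/2)]
  have h0 := Real.exp_pos (-(n:ℝ)*q)
  rw [hsplit, div_mul_eq_mul_div, le_div_iff₀ hn0]
  nlinarith [mul_le_mul_of_nonneg_left hge h0.le, h0.le, hq0.le]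

lemma termB4small {x c : ℝ} (hx : 0 ≤ x) (hc : x ≤ c) :
    x^2*Real.exp (-x) ≤ c*(1+c)*(Real.exp (-x) - Real.exp (-(2*x))) := by
  have h1 : Real.exp (-x)*(1+x) ≤ 1 := by
    have := Real.add_one_le_exp x
    have hp := Real.exp_pos (-x)
    have hh : Real.exp (-x) * Real.exp x = 1 := by rw [← Real.exp_add]; simp
    nlinarith
  have h2 : Real.exp (-(2*x)) = Real.exp (-x)*Real.exp (-x) := by
    rw [← Real.exp_add]; ring_nf
  have h3 : x ≤ (1 - Real.exp (-x))*(1+x) := by nlinarith [Real.exp_pos (-x)]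
  have hp := Real.exp_pos (-x)
  have h4 : Real.exp (-x) - Real.exp (-(2*x)) = Real.exp (-x)*(1 - Real.exp (-x)) := by
    rw [h2]; ring
  rw [h4]
  have h5 : 0 ≤ 1 - Real.exp (-x) := by nlinarith
  -- x^2 e ≤ c(1+c) e (1-e) : since x(1+x) ≤ c(1+c) and x ≤ (1-e)(1+x)
  have h6 : x^2 * (1+x) ≤ x*(1+x)*((1 - Real.exp (-x))*(1+x)) := by nlinarith
  have h7 : x*(1+x) ≤ c*(1+c) := by nlinarith
  have h8 : (0:ℝ) < 1 + x := by linarith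
  nlinarith [mul_le_mul_of_nonneg_left h3 (mul_nonneg hx hp.le),
    mul_le_mul_of_nonneg_right h7 (mul_nonneg h5 hp.le)]

lemma termB4big {x c : ℝ} (hc : 1 ≤ c) (hcx : c < x) :
    x^2*Real.exp (-x) ≤ 16*Real.exp (-c/2)*x := by
  have hx1 : 1 ≤ x := by linarith
  have hq : x^2 ≤ 16 * Real.exp (x/2) := by
    have h1 : 1 + x/4 ≤ Real.exp (x/4) := by nlinarith [Real.add_one_le_exp (x/4)]
    have h2 : Real.exp (x/4)*Real.exp (x/4) = Real.exp (x/2) := by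
      rw [← Real.exp_add]; ring_nf
    nlinarith [Real.exp_pos (x/4)]
  have hsp : Real.exp (-x) = Real.exp (-x/2) * Real.exp (-x/2) := by
    rw [← Real.exp_add]; ring_nf
  have hmon : Real.exp (-x/2) ≤ Real.exp (-c/2) := by
    refine Real.exp_le_exp.2 (by linarith)
  have hk : Real.exp (x/2) * Real.exp (-x/2) = 1 := by rw [← Real.exp_add]; ring_nf; simp
  have hp2 := Real.exp_pos (-x/2)
  have hpc := Real.exp_pos (-c/2)
  calc x^2*Real.exp (-x) = x^2 * Real.exp (-x/2) * Real.exp (-x/2) := by rw [hsp]; ring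
    _ ≤ 16*Real.exp (x/2) * Real.exp (-x/2) * Real.exp (-x/2) := by
        refine mul_le_mul_of_nonneg_right (mul_le_mul_of_nonneg_right hq hp2.le) hp2.le
    _ = 16 * Real.exp (-x/2) := by rw [mul_assoc 16, hk]; ring
    _ ≤ 16 * Real.exp (-c/2) := by nlinarith
    _ ≤ 16*Real.exp (-c/2)*x := by nlinarith

lemma tsum_cs {f g : ℕ → ℝ} (hf : Summable (fun i => f i^2)) (hg : Summable (fun i => g i^2))
    (hfg : Summable (fun i => f i * g i)) (h0 : ∀ i, 0 ≤ f i * g i) :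
    ∑' i, f i * g i ≤ Real.sqrt (∑' i, f i^2) * Real.sqrt (∑' i, g i^2) := by
  refine Summable.tsum_le_of_sum_le hfg (fun s => ?_)
  have h1 : (∑ i ∈ s, f i * g i)^2 ≤ (∑ i ∈ s, f i^2) * (∑ i ∈ s, g i^2) :=
    Finset.sum_mul_sq_le_sq_mul_sq s f g
  have h2 : ∑ i ∈ s, f i * g i ≤ Real.sqrt ((∑ i ∈ s, f i^2) * (∑ i ∈ s, g i^2)) := by
    rw [show (∑ i ∈ s, f i * g i) = Real.sqrt ((∑ i ∈ s, f i * g i)^2) by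
      rw [Real.sqrt_sq (Finset.sum_nonneg (fun i _ => h0 i))]]
    exact Real.sqrt_le_sqrt h1
  refine le_trans h2 ?_
  rw [Real.sqrt_mul (Finset.sum_nonneg (fun i _ => sq_nonneg _))]
  refine mul_le_mul (Real.sqrt_le_sqrt (Summable.sum_le_tsum s (fun i _ => sq_nonneg _) hf))
    (Real.sqrt_le_sqrt (Summable.sum_le_tsum s (fun i _ => sq_nonneg _) hg)) (Real.sqrt_nonneg _)
    (Real.sqrt_nonneg _)

end VarRange


set_option maxHeartbeats 2000000 in
/-- If `n^p · σ_n² → ∞` for some `p > 0`, then `Var(R_n) = σ_n²·(1+o(1))` as `n → ∞`,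
i.e. `Var(R_n)/σ_n² → 1`. -/
theorem variance_range_renewal_asymptotics
    {Ω : Type*} [MeasurableSpace Ω] (P : Measure Ω) [IsProbabilityMeasure P]
    (π : ℕ → ℝ) (hπpos : ∀ i, 0 < π i) (hπmono : ∀ i, π (i + 1) ≤ π i)
    (hπsum : HasSum π 1)
    (ξ : ℕ → Ω → ℕ) (hξmeas : ∀ k, Measurable (ξ k))
    (hξindep : iIndepFun ξ P)
    (hξlaw : ∀ k i, P {ω | ξ k ω = i} = ENNReal.ofReal (π i))
    (R : ℕ → Ω → ℕ)
    (hR : ∀ n ω, R n ω = ((Finset.range n).image fun k => ξ k ω).card)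
    (μ : ℝ → ℝ) (hμ : ∀ t, μ t = ∑' i, (1 - Real.exp (-t * π i)))
    (p : ℝ) (hp : 0 < p)
    (hgrow : Tendsto (fun n : ℕ => (n : ℝ) ^ p * (μ (2 * n) - μ n)) atTop atTop) :
    Tendsto (fun n : ℕ =>
        variance (fun ω => (R n ω : ℝ)) P / (μ (2 * n) - μ n)) atTop (𝓝 1) := by
  classical
  have hqsum : Summable π := hπsum.summable
  have hq1 : ∀ i, π i ≤ 1 := fun i => le_hasSum hπsum i (fun j _ => (hπpos j).le)
  -- summability facts
  have hmusum : ∀ t : ℝ, 0 ≤ t → Summable (fun i => 1 - Real.exp (-t * π i)) := by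
    intro t ht
    refine Summable.of_nonneg_of_le (fun i => ?_) (fun i => ?_) (hqsum.mul_left t)
    · have h1 : Real.exp (-t*π i) ≤ 1 := by
        rw [Real.exp_le_one_iff]
        have : 0 ≤ t * π i := mul_nonneg ht (hπpos i).le
        linarith
      linarith
    · nlinarith [Real.add_one_le_exp (-t*π i)]
  have hdiffsum : ∀ s t : ℝ, 0 ≤ s → s ≤ t →
      Summable (fun i => Real.exp (-s * π i) - Real.exp (-t * π i)) := by
    intro s t hs hst
    exact ((hmusum t (hs.trans hst)).sub (hmusum s hs)).congr (fun i => by ring)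
  have hmudiff : ∀ s t : ℝ, 0 ≤ s → s ≤ t →
      μ t - μ s = ∑' i, (Real.exp (-s * π i) - Real.exp (-t * π i)) := by
    intro s t hs hst
    rw [hμ t, hμ s, ← Summable.tsum_sub (hmusum t (hs.trans hst)) (hmusum s hs)]
    exact tsum_congr (fun i => by ring)
  -- abbreviations (as plain functions)
  set σ2 : ℕ → ℝ := fun n => μ (2*(n:ℝ)) - μ (n:ℝ) with hσ2def
  have hσ2 : ∀ n : ℕ, σ2 n = ∑' i, (Real.exp (-(n:ℝ) * π i) - Real.exp (-(2*(n:ℝ)) * π i)) := by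
    intro n
    exact hmudiff (n:ℝ) (2*(n:ℝ)) (Nat.cast_nonneg n)
      (by nlinarith [Nat.cast_nonneg (α := ℝ) n])
  have hsumσ : ∀ n : ℕ,
      Summable (fun i => Real.exp (-(n:ℝ) * π i) - Real.exp (-(2*(n:ℝ)) * π i)) := by
    intro n
    exact hdiffsum (n:ℝ) (2*(n:ℝ)) (Nat.cast_nonneg n) (by nlinarith [Nat.cast_nonneg (α := ℝ) n])
  have hσterm : ∀ (n : ℕ) i, 0 ≤ Real.exp (-(n:ℝ) * π i) - Real.exp (-(2*(n:ℝ)) * π i) := by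
    intro n i
    have h : -(2*(n:ℝ))*π i ≤ -(n:ℝ)*π i := by
      nlinarith [(hπpos i).le, Nat.cast_nonneg (α := ℝ) n]
    have := Real.exp_le_exp.2 h
    linarith
  have hσnonneg : ∀ n : ℕ, 0 ≤ σ2 n := fun n => by
    rw [hσ2 n]; exact tsum_nonneg (hσterm n)
  have hσpos : ∀ n : ℕ, 1 ≤ n → 0 < σ2 n := by
    intro n hn
    rw [hσ2 n]
    refine Summable.tsum_pos (hsumσ n) (hσterm n) 0 ?_
    have hn1 : (1:ℝ) ≤ (n:ℝ) := by exact_mod_cast hn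
    have h : -(2*(n:ℝ))*π 0 < -(n:ℝ)*π 0 := by nlinarith [hπpos 0]
    have := Real.exp_lt_exp.2 h
    linarith
  set M2 : ℕ → ℝ := fun n => ∑' i, (1 - Real.exp (-((n:ℝ)/2) * π i)) with hM2def
  set T : ℕ → ℝ := fun n => ∑' i, (Real.exp (-((n:ℝ)/2) * π i) - Real.exp (-(n:ℝ) * π i))
    with hTdef
  set A : ℕ → ℝ := fun n => ∑' i, (π i * Real.exp (-(n:ℝ) * π i)) with hAdef
  set E : ℕ → ℝ := fun n => ∑' i, ((n:ℝ) * π i^2 * Real.exp (-(n:ℝ) * π i)) with hEdef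
  set S : ℕ → ℝ := fun n => ∑' i, ((1 - π i)^n * (1 - (1 - π i)^n)) with hSdef
  have hsumT : ∀ n : ℕ,
      Summable (fun i => Real.exp (-((n:ℝ)/2) * π i) - Real.exp (-(n:ℝ) * π i)) := by
    intro n
    refine hdiffsum ((n:ℝ)/2) (n:ℝ) (by positivity) (by nlinarith [Nat.cast_nonneg (α := ℝ) n])
  have hsumg : ∀ n : ℕ, Summable (fun i => π i * Real.exp (-(n:ℝ) * π i)) := by
    intro n
    refine Summable.of_nonneg_of_le (fun i => mul_nonneg (hπpos i).le (Real.exp_pos _).le)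
      (fun i => ?_) hqsum
    have h1 : Real.exp (-(n:ℝ)*π i) ≤ 1 := by
      rw [Real.exp_le_one_iff]
      have : 0 ≤ (n:ℝ) * π i := mul_nonneg (Nat.cast_nonneg n) (hπpos i).le
      linarith
    nlinarith [hπpos i]
  have hsumE : ∀ n : ℕ, Summable (fun i => (n:ℝ) * π i^2 * Real.exp (-(n:ℝ) * π i)) := by
    intro n
    refine Summable.of_nonneg_of_le
      (fun i => by positivity)
      (fun i => ?_) (hqsum.mul_left (n:ℝ))
    have h1 : Real.exp (-(n:ℝ)*π i) ≤ 1 := by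
      rw [Real.exp_le_one_iff]
      have : 0 ≤ (n:ℝ) * π i := mul_nonneg (Nat.cast_nonneg n) (hπpos i).le
      linarith
    have h2 : π i^2 ≤ π i := by nlinarith [hπpos i, hq1 i]
    have h3 : 0 ≤ (n:ℝ) := Nat.cast_nonneg n
    nlinarith [hπpos i, mul_nonneg h3 (sq_nonneg (π i))]
  have hsumS : ∀ n : ℕ, Summable (fun i => (1 - π i)^n * (1 - (1 - π i)^n)) := by
    intro n
    refine Summable.of_nonneg_of_le (fun i => ?_) (fun i => ?_) (hqsum.mul_left (n:ℝ))
    · have h0 : (0:ℝ) ≤ 1 - π i := by linarith [hq1 i]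
      have h1 : (1 - π i)^n ≤ 1 := pow_le_one₀ h0 (by linarith [hπpos i])
      have h2 : 0 ≤ (1 - π i)^n := pow_nonneg h0 n
      nlinarith
    · have h0 : (0:ℝ) ≤ 1 - π i := by linarith [hq1 i]
      have h1 : (1 - π i)^n ≤ 1 := pow_le_one₀ h0 (by linarith [hπpos i])
      have h2 : 0 ≤ (1 - π i)^n := pow_nonneg h0 n
      have h3 : 1 - (1 - π i)^n ≤ (n:ℝ) * π i := by
        have := VarRange.one_sub_pow_le (y := 1 - π i) n h0 (by linarith [hπpos i])
        calc 1 - (1 - π i)^n ≤ (n:ℝ) * (1 - (1 - π i)) := this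
          _ = (n:ℝ) * π i := by ring
      nlinarith [mul_nonneg (Nat.cast_nonneg (α := ℝ) n) (hπpos i).le]
  -- B1 : |S n - σ2 n| ≤ E n
  have hB1 : ∀ n : ℕ, |S n - σ2 n| ≤ E n := by
    intro n
    rw [hSdef, hσ2 n, ← Summable.tsum_sub (hsumS n) (hsumσ n)]
    have hd : Summable (fun i => (1 - π i)^n * (1 - (1 - π i)^n)
        - (Real.exp (-(n:ℝ) * π i) - Real.exp (-(2*(n:ℝ)) * π i))) :=
      (hsumS n).sub (hsumσ n)
    calc |∑' i, ((1 - π i)^n * (1 - (1 - π i)^n)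
            - (Real.exp (-(n:ℝ) * π i) - Real.exp (-(2*(n:ℝ)) * π i)))|
        ≤ ∑' i, |(1 - π i)^n * (1 - (1 - π i)^n)
            - (Real.exp (-(n:ℝ) * π i) - Real.exp (-(2*(n:ℝ)) * π i))| := by
          have hnorm := norm_tsum_le_tsum_norm (f := fun i => (1 - π i)^n * (1 - (1 - π i)^n)
              - (Real.exp (-(n:ℝ) * π i) - Real.exp (-(2*(n:ℝ)) * π i)))
            (by simpa [Real.norm_eq_abs] using hd.abs)
          simpa [Real.norm_eq_abs] using hnorm
      _ ≤ E n := by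
          rw [hEdef]
          exact Summable.tsum_le_tsum (fun i => VarRange.termB1 (hπpos i) (hq1 i) n) hd.abs (hsumE n)
  -- B2 : A n ≤ (2/n) * T n
  have hA2 : ∀ n : ℕ, 1 ≤ n → A n ≤ (2/(n:ℝ)) * T n := by
    intro n hn
    rw [hAdef, hTdef, ← tsum_mul_left]
    exact Summable.tsum_le_tsum (fun i => VarRange.termB2 (hπpos i) hn) (hsumg n)
      ((hsumT n).mul_left _)
  -- B3 : T n ^ 2 ≤ M2 n * σ2 n
  have hT2 : ∀ n : ℕ, (T n)^2 ≤ M2 n * σ2 n := by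
    intro n
    have hu1 : ∀ i, Real.exp (-((n:ℝ)/2) * π i) ≤ 1 := by
      intro i
      rw [Real.exp_le_one_iff]
      have : 0 ≤ ((n:ℝ)/2) * π i := mul_nonneg (by positivity) (hπpos i).le
      linarith
    have hu0 : ∀ i, 0 < Real.exp (-((n:ℝ)/2) * π i) := fun i => Real.exp_pos _
    have hz0 : ∀ i, 0 ≤ 1 - Real.exp (-((n:ℝ)/2) * π i) := fun i => by linarith [hu1 i]
    set f : ℕ → ℝ := fun i => Real.exp (-((n:ℝ)/2) * π i) *
      Real.sqrt (1 - Real.exp (-((n:ℝ)/2) * π i)) with hfdef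
    set g : ℕ → ℝ := fun i => Real.sqrt (1 - Real.exp (-((n:ℝ)/2) * π i)) with hgdef
    have husq : ∀ i, Real.exp (-((n:ℝ)/2) * π i)^2 = Real.exp (-(n:ℝ) * π i) := by
      intro i
      rw [← Real.exp_nat_mul]
      congr 1
      push_cast
      ring
    have husq2 : ∀ i, Real.exp (-(n:ℝ) * π i)^2 = Real.exp (-(2*(n:ℝ)) * π i) := by
      intro i
      rw [← Real.exp_nat_mul]
      congr 1
      push_cast
      ring
    have hfg : ∀ i, f i * g i = Real.exp (-((n:ℝ)/2) * π i) - Real.exp (-(n:ℝ) * π i) := by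
      intro i
      rw [hfdef, hgdef]
      have := Real.mul_self_sqrt (hz0 i)
      have h2 := husq i
      nlinarith
    have hf2 : ∀ i, f i^2 = Real.exp (-(n:ℝ) * π i) * (1 - Real.exp (-((n:ℝ)/2) * π i)) := by
      intro i
      rw [hfdef, mul_pow, Real.sq_sqrt (hz0 i), husq i]
    have hg2 : ∀ i, g i^2 = 1 - Real.exp (-((n:ℝ)/2) * π i) := fun i =>
      Real.sq_sqrt (hz0 i)
    have hsumf2 : Summable (fun i => f i^2) := by
      refine (hmusum ((n:ℝ)/2) (by positivity)).of_nonneg_of_le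
        (fun i => sq_nonneg _) (fun i => ?_)
      rw [hf2 i]
      have h1 : Real.exp (-(n:ℝ)*π i) ≤ 1 := by
        rw [Real.exp_le_one_iff]
        have : 0 ≤ (n:ℝ) * π i := mul_nonneg (Nat.cast_nonneg n) (hπpos i).le
        linarith
      nlinarith [hz0 i, (Real.exp_pos (-(n:ℝ)*π i)).le]
    have hsumg2 : Summable (fun i => g i^2) :=
      (hmusum ((n:ℝ)/2) (by positivity)).congr (fun i => (hg2 i).symm)
    have hsumfg : Summable (fun i => f i * g i) := (hsumT n).congr (fun i => (hfg i).symm)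
    have hcs := VarRange.tsum_cs hsumf2 hsumg2 hsumfg (fun i => by
      rw [hfg i]
      have h := hu1 i
      have h2 : Real.exp (-(n:ℝ) * π i) ≤ Real.exp (-((n:ℝ)/2) * π i) := by
        refine Real.exp_le_exp.2 ?_
        nlinarith [(hπpos i).le, Nat.cast_nonneg (α := ℝ) n]
      linarith)
    have hTfg : T n = ∑' i, f i * g i := by
      rw [hTdef]; exact tsum_congr (fun i => (hfg i).symm)
    have hF2le : ∑' i, f i^2 ≤ σ2 n := by
      rw [hσ2 n]
      refine Summable.tsum_le_tsum (fun i => ?_) hsumf2 (hsumσ n)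
      rw [hf2 i]
      have h2 : Real.exp (-(n:ℝ) * π i) ≤ Real.exp (-((n:ℝ)/2) * π i) := by
        refine Real.exp_le_exp.2 ?_
        nlinarith [(hπpos i).le, Nat.cast_nonneg (α := ℝ) n]
      have h3 := husq2 i
      nlinarith [(Real.exp_pos (-(n:ℝ)*π i)).le, hu1 i, (hu0 i).le]
    have hG2eq : ∑' i, g i^2 = M2 n := by
      rw [hM2def]; exact tsum_congr (fun i => hg2 i)
    have hT0 : 0 ≤ T n := by
      rw [hTfg]
      exact tsum_nonneg (fun i => by
        rw [hfg i]
        have h2 : Real.exp (-(n:ℝ) * π i) ≤ Real.exp (-((n:ℝ)/2) * π i) := by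
          refine Real.exp_le_exp.2 ?_
          nlinarith [(hπpos i).le, Nat.cast_nonneg (α := ℝ) n]
        linarith)
    have hM20 : 0 ≤ M2 n := by
      rw [← hG2eq]; exact tsum_nonneg (fun i => sq_nonneg _)
    have hchain : T n ≤ Real.sqrt (σ2 n) * Real.sqrt (M2 n) := by
      rw [hTfg]
      refine le_trans hcs ?_
      refine mul_le_mul (Real.sqrt_le_sqrt hF2le) (le_of_eq (by rw [hG2eq]))
        (Real.sqrt_nonneg _) (Real.sqrt_nonneg _)
    calc (T n)^2 ≤ (Real.sqrt (σ2 n) * Real.sqrt (M2 n))^2 := by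
          exact pow_le_pow_left₀ hT0 hchain 2
      _ = σ2 n * M2 n := by
          rw [mul_pow, Real.sq_sqrt (hσnonneg n), Real.sq_sqrt hM20]
      _ = M2 n * σ2 n := by ring
  -- B4
  have hB4 : ∀ n : ℕ, 1 ≤ n → ∀ x0 : ℝ, 1 ≤ x0 →
      E n ≤ (x0*(1+x0)/(n:ℝ)) * σ2 n + 16*Real.exp (-x0/2) := by
    intro n hn x0 hx0
    have hn0 : (0:ℝ) < n := by exact_mod_cast hn
    have key : ∀ i, (n:ℝ) * π i^2 * Real.exp (-(n:ℝ) * π i) ≤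
        (x0*(1+x0)/(n:ℝ)) * (Real.exp (-(n:ℝ) * π i) - Real.exp (-(2*(n:ℝ)) * π i))
          + 16*Real.exp (-x0/2) * π i := by
      intro i
      have hx : 0 ≤ (n:ℝ)*π i := mul_nonneg (Nat.cast_nonneg n) (hπpos i).le
      have hq16 : 0 ≤ 16*Real.exp (-x0/2)*π i :=
        mul_nonneg (mul_nonneg (by norm_num) (Real.exp_pos _).le) (hπpos i).le
      have hσt := hσterm n i
      have hcoef : 0 ≤ x0*(1+x0)/(n:ℝ) := by positivity
      have e1 : Real.exp (-(2*((n:ℝ)*π i))) = Real.exp (-(2*(n:ℝ))*π i) := by ring_nf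
      have e2 : Real.exp (-((n:ℝ)*π i)) = Real.exp (-(n:ℝ)*π i) := by ring_nf
      refine le_of_mul_le_mul_left ?_ hn0
      have hne : (n:ℝ) ≠ 0 := ne_of_gt hn0
      have hrw : (n:ℝ)*((x0*(1+x0)/(n:ℝ)) * (Real.exp (-(n:ℝ)*π i)
            - Real.exp (-(2*(n:ℝ))*π i)) + 16*Real.exp (-x0/2)*π i)
          = x0*(1+x0)*(Real.exp (-(n:ℝ)*π i) - Real.exp (-(2*(n:ℝ))*π i))
            + (n:ℝ)*(16*Real.exp (-x0/2)*π i) := by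
        field_simp
      rw [hrw]
      rcases le_or_gt ((n:ℝ)*π i) x0 with hle | hlt
      · have h := VarRange.termB4small hx hle
        rw [e1, e2] at h
        nlinarith [h, hq16, hn0]
      · have h := VarRange.termB4big hx0 hlt
        rw [e2] at h
        have hco : 0 ≤ x0*(1+x0)*(Real.exp (-(n:ℝ)*π i) - Real.exp (-(2*(n:ℝ))*π i)) := by
          refine mul_nonneg (by nlinarith) hσt
        nlinarith [h, hco]
    rw [hEdef]
    calc (∑' i, ((n:ℝ) * π i^2 * Real.exp (-(n:ℝ) * π i)))
        ≤ ∑' i, ((x0*(1+x0)/(n:ℝ)) * (Real.exp (-(n:ℝ) * π i)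
            - Real.exp (-(2*(n:ℝ)) * π i)) + 16*Real.exp (-x0/2) * π i) :=
          Summable.tsum_le_tsum key (hsumE n) (((hsumσ n).mul_left _).add (hqsum.mul_left _))
      _ = (x0*(1+x0)/(n:ℝ)) * σ2 n + 16*Real.exp (-x0/2) := by
          rw [Summable.tsum_add ((hsumσ n).mul_left _) (hqsum.mul_left _), tsum_mul_left,
            tsum_mul_left, ← hσ2 n, hπsum.tsum_eq, mul_one]
  -- the per-n error bound
  set c : ℝ := 2*p+2 with hcdef
  set x0 : ℕ → ℝ := fun n => c * Real.log n with hx0def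
  have hx0ge : ∀ n : ℕ, 2 ≤ n → 1 ≤ x0 n := by
    intro n hn
    have hl2 : Real.log 2 ≤ Real.log n :=
      Real.log_le_log (by norm_num) (by exact_mod_cast hn)
    have hl2' : (0.6931:ℝ) < Real.log 2 := by linarith [Real.log_two_gt_d9]
    show (1:ℝ) ≤ c * Real.log n
    have hc0 : (2:ℝ) ≤ c := by rw [hcdef]; linarith
    nlinarith
  have hmain : ∀ n : ℕ, 2 ≤ n →
      |variance (fun ω => (R n ω : ℝ)) P / σ2 n - 1| ≤
        x0 n*(1+x0 n)/(n:ℝ) + 16*Real.exp (-x0 n/2)/σ2 n + 4*Real.exp 2*M2 n/(n:ℝ) := by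
    intro n hn
    have hn1 : 1 ≤ n := le_trans (by norm_num) hn
    have hn0 : (0:ℝ) < n := by exact_mod_cast hn1
    have hσp := hσpos n hn1
    obtain ⟨D, hD0, hDle, hVar⟩ :=
      VarRange.var_eq P π ξ hπpos hπsum hξmeas hξindep hξlaw n
    have hRfun : (fun ω => (R n ω : ℝ))
        = (fun ω => ((((Finset.range n).image fun k => ξ k ω).card : ℕ) : ℝ)) := by
      funext ω; rw [hR n ω]
    rw [hRfun, hVar]
    have hDbound : D ≤ 4*Real.exp 2*(M2 n * σ2 n)/(n:ℝ) := by
      refine le_trans hDle ?_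
      have hAn := hA2 n hn1
      have hT2n := hT2 n
      have hA0n : 0 ≤ A n := by
        rw [hAdef]
        exact tsum_nonneg (fun i => mul_nonneg (hπpos i).le (Real.exp_pos _).le)
      have hT0n : 0 ≤ T n := by
        rw [hTdef]
        refine tsum_nonneg (fun i => ?_)
        have h2 : Real.exp (-(n:ℝ) * π i) ≤ Real.exp (-((n:ℝ)/2) * π i) := by
          refine Real.exp_le_exp.2 ?_
          nlinarith [(hπpos i).le, Nat.cast_nonneg (α := ℝ) n]
        linarith
      have hAA : (A n)^2 ≤ (2/(n:ℝ))^2 * (M2 n * σ2 n) := by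
        have h1 : (A n)^2 ≤ ((2/(n:ℝ)) * T n)^2 := by
          refine pow_le_pow_left₀ hA0n hAn 2
        refine le_trans h1 ?_
        rw [mul_pow]
        refine mul_le_mul_of_nonneg_left hT2n (by positivity)
      have hAeq : A n = ∑' i, (π i * Real.exp (-(n:ℝ) * π i)) := hAdef ▸ rfl
      calc Real.exp 2 * n * (∑' i, π i * Real.exp (-(n:ℝ) * π i))^2
          = Real.exp 2 * n * (A n)^2 := by rw [hAdef]
        _ ≤ Real.exp 2 * n * ((2/(n:ℝ))^2 * (M2 n * σ2 n)) := by
            refine mul_le_mul_of_nonneg_left hAA (by positivity)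
        _ = 4*Real.exp 2*(M2 n * σ2 n)/(n:ℝ) := by
            field_simp
            ring
    have habs : |(S n - D) - σ2 n| ≤
        (x0 n*(1+x0 n)/(n:ℝ))*σ2 n + 16*Real.exp (-x0 n/2)
          + 4*Real.exp 2*(M2 n*σ2 n)/(n:ℝ) := by
      have h3 : |(S n - D) - σ2 n| ≤ |S n - σ2 n| + |D| := by
        have heq : (S n - D) - σ2 n = (S n - σ2 n) - D := by ring
        rw [heq]
        exact abs_sub _ _
      rw [abs_of_nonneg hD0] at h3
      have hEn := hB4 n hn1 (x0 n) (hx0ge n hn)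
      linarith [hB1 n, hEn, hDbound]
    have hSeq : (∑' i, ((1 - π i)^n * (1 - (1 - π i)^n))) = S n := (hSdef ▸ rfl)
    rw [hSeq]
    have hne : σ2 n ≠ 0 := ne_of_gt hσp
    have hdiv : (S n - D)/σ2 n - 1 = ((S n - D) - σ2 n)/σ2 n := by field_simp
    rw [hdiv, abs_div, abs_of_pos hσp]
    calc |(S n - D) - σ2 n| / σ2 n
        ≤ ((x0 n*(1+x0 n)/(n:ℝ))*σ2 n + 16*Real.exp (-x0 n/2)
            + 4*Real.exp 2*(M2 n*σ2 n)/(n:ℝ)) / σ2 n := by gcongr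
      _ = x0 n*(1+x0 n)/(n:ℝ) + 16*Real.exp (-x0 n/2)/σ2 n + 4*Real.exp 2*M2 n/(n:ℝ) := by
          field_simp
  -- limits
  have l1 : Tendsto (fun n : ℕ => x0 n*(1+x0 n)/(n:ℝ)) atTop (𝓝 0) := by
    have base1 : Tendsto (fun x : ℝ => Real.log x ^ 1 / (1*x + 0)) atTop (𝓝 0) :=
      Real.tendsto_pow_log_div_mul_add_atTop 1 0 1 one_ne_zero
    have base2 : Tendsto (fun x : ℝ => Real.log x ^ 2 / (1*x + 0)) atTop (𝓝 0) :=
      Real.tendsto_pow_log_div_mul_add_atTop 1 0 2 one_ne_zero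
    have comp1 := (base1.comp tendsto_natCast_atTop_atTop).const_mul c
    have comp2 := (base2.comp tendsto_natCast_atTop_atTop).const_mul (c^2)
    have hsum2 := comp1.add comp2
    simp only [mul_zero, add_zero] at hsum2
    refine hsum2.congr (fun n => ?_)
    simp only [Function.comp_apply, hx0def]
    field_simp
  have l2 : Tendsto (fun n : ℕ => 16*Real.exp (-x0 n/2)/σ2 n) atTop (𝓝 0) := by
    have hgrow' : Tendsto (fun n : ℕ => (n:ℝ)^(p+1) * σ2 n) atTop atTop := by
      refine tendsto_atTop_mono' atTop ?_ hgrow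
      filter_upwards [eventually_ge_atTop 1] with n hn
      have hn0 : (0:ℝ) < n := by exact_mod_cast hn
      have hn1 : (1:ℝ) ≤ (n:ℝ) := by exact_mod_cast hn
      have hre : (n:ℝ)^(p+1) = (n:ℝ)^p * (n:ℝ) := by
        rw [Real.rpow_add hn0, Real.rpow_one]
      rw [hre]
      have hσn := hσnonneg n
      have hrp : (0:ℝ) ≤ (n:ℝ)^p := (Real.rpow_nonneg hn0.le p)
      have : (n:ℝ)^p * σ2 n ≤ (n:ℝ)^p * (n:ℝ) * σ2 n := by
        nlinarith [mul_nonneg (mul_nonneg hrp hσn) (by linarith : (0:ℝ) ≤ (n:ℝ) - 1)]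
      exact this
    have hinv := (tendsto_inv_atTop_zero.comp hgrow').const_mul 16
    simp only [mul_zero] at hinv
    refine Tendsto.congr' ?_ hinv
    filter_upwards [eventually_ge_atTop 1] with n hn
    have hn0 : (0:ℝ) < n := by exact_mod_cast hn
    have hσp := hσpos n hn
    have hreq : Real.exp (-x0 n/2) = (n:ℝ)^(-(p+1)) := by
      rw [hx0def, Real.rpow_def_of_pos hn0]
      congr 1
      rw [hcdef]
      ring
    simp only [Function.comp_apply]
    rw [hreq, Real.rpow_neg hn0.le]
    have hrne : (n:ℝ)^(p+1) ≠ 0 := by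
      refine ne_of_gt (Real.rpow_pos_of_pos hn0 _)
    field_simp
  have l3' : Tendsto (fun n : ℕ => M2 n/(n:ℝ)) atTop (𝓝 0) := by
    refine Metric.tendsto_nhds.2 (fun ε hε => ?_)
    have hpartial := hπsum.tendsto_sum_nat
    have hev : ∀ᶠ m in atTop, 1 - ∑ i ∈ Finset.range m, π i < ε/4 := by
      have := (tendsto_order.1 hpartial).1 (1 - ε/4) (by linarith)
      filter_upwards [this] with m hm
      linarith
    obtain ⟨m, hm⟩ := hev.exists
    set s : Set ℕ := ↑(Finset.range m) with hsdef
    have hsumπs : Summable ((fun i => π i) ∘ ((↑) : s → ℕ)) := hqsum.subtype s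
    have hsumπsc : Summable ((fun i => π i) ∘ ((↑) : ↑sᶜ → ℕ)) := hqsum.subtype sᶜ
    have hsplitπ := Summable.tsum_add_tsum_compl (f := fun i => π i) hsumπs hsumπsc
    have hshead : ∑' (x : s), π x = ∑ i ∈ Finset.range m, π i :=
      Finset.tsum_subtype (Finset.range m) (fun i => π i)
    have htail : ∑' (x : ↑sᶜ), π x < ε/4 := by
      rw [hπsum.tsum_eq] at hsplitπ
      rw [hshead] at hsplitπ
      linarith
    have hεn := (tendsto_const_div_atTop_nhds_zero_nat (m:ℝ)).eventually_lt_const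
      (show (0:ℝ) < ε/2 by linarith)
    filter_upwards [hεn, eventually_ge_atTop 1] with n hn2 hn1
    have hn0 : (0:ℝ) < n := by exact_mod_cast hn1
    -- bound M2 n
    have hsummu := hmusum ((n:ℝ)/2) (by positivity)
    have hsummus := hsummu.subtype s
    have hsummusc := hsummu.subtype sᶜ
    have hsplitmu := Summable.tsum_add_tsum_compl
      (f := fun i => 1 - Real.exp (-((n:ℝ)/2) * π i)) hsummus hsummusc
    have hhead : ∑' (x : s), (1 - Real.exp (-((n:ℝ)/2) * π ↑x)) ≤ m := by
      have heq : ∑' (x : s), (1 - Real.exp (-((n:ℝ)/2) * π ↑x))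
          = ∑ i ∈ Finset.range m, (1 - Real.exp (-((n:ℝ)/2) * π i)) :=
        Finset.tsum_subtype (Finset.range m) (fun i => 1 - Real.exp (-((n:ℝ)/2) * π i))
      rw [heq]
      calc ∑ i ∈ Finset.range m, (1 - Real.exp (-((n:ℝ)/2) * π i))
          ≤ ∑ i ∈ Finset.range m, (1:ℝ) := by
            refine Finset.sum_le_sum (fun i _ => ?_)
            have := (Real.exp_pos (-((n:ℝ)/2) * π i)).le
            linarith
        _ = m := by simp
    have htailmu : ∑' (x : ↑sᶜ), (1 - Real.exp (-((n:ℝ)/2) * π ↑x)) ≤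
        ((n:ℝ)/2) * ∑' (x : ↑sᶜ), π ↑x := by
      rw [← tsum_mul_left]
      refine Summable.tsum_le_tsum (fun x => ?_) hsummusc (hsumπsc.mul_left _)
      have := Real.add_one_le_exp (-((n:ℝ)/2) * π ↑x)
      nlinarith
    have hM2le : M2 n ≤ (m:ℝ) + ((n:ℝ)/2)*(ε/4) := by
      have hM2eq : M2 n = ∑' (x : s), (1 - Real.exp (-((n:ℝ)/2) * π ↑x))
          + ∑' (x : ↑sᶜ), (1 - Real.exp (-((n:ℝ)/2) * π ↑x)) := hsplitmu.symm
      rw [hM2eq]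
      have htail2 : ((n:ℝ)/2) * ∑' (x : ↑sᶜ), π ↑x ≤ ((n:ℝ)/2)*(ε/4) := by
        refine mul_le_mul_of_nonneg_left (le_of_lt htail) (by positivity)
      linarith [hhead, le_trans htailmu htail2]
    have hM20 : 0 ≤ M2 n := by
      rw [hM2def]
      refine tsum_nonneg (fun i => ?_)
      have h1 : Real.exp (-((n:ℝ)/2)*π i) ≤ 1 := by
        rw [Real.exp_le_one_iff]
        have : 0 ≤ ((n:ℝ)/2) * π i := mul_nonneg (by positivity) (hπpos i).le
        linarith
      linarith
    rw [Real.dist_eq, sub_zero, abs_of_nonneg (by positivity)]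
    have h6 : M2 n / (n:ℝ) ≤ (m:ℝ)/(n:ℝ) + ε/8 := by
      rw [div_le_iff₀ hn0]
      have : ((m:ℝ)/(n:ℝ) + ε/8) * (n:ℝ) = (m:ℝ) + ε/8*(n:ℝ) := by
        field_simp
      rw [this]
      nlinarith [hM2le]
    linarith [h6, hn2]
  have l3 : Tendsto (fun n : ℕ => 4*Real.exp 2*M2 n/(n:ℝ)) atTop (𝓝 0) := by
    have := l3'.const_mul (4*Real.exp 2)
    simp only [mul_zero] at this
    refine this.congr (fun n => ?_)
    ring
  -- squeeze
  have lsum : Tendsto (fun n : ℕ => x0 n*(1+x0 n)/(n:ℝ) + 16*Real.exp (-x0 n/2)/σ2 n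
      + 4*Real.exp 2*M2 n/(n:ℝ)) atTop (𝓝 0) := by
    have := (l1.add l2).add l3
    simpa using this
  show Tendsto (fun n : ℕ => variance (fun ω => (R n ω : ℝ)) P / σ2 n) atTop (𝓝 1)
  rw [tendsto_iff_dist_tendsto_zero]
  refine squeeze_zero' (Filter.Eventually.of_forall (fun n => dist_nonneg)) ?_ lsum
  filter_upwards [eventually_ge_atTop 2] with n hn
  rw [Real.dist_eq]
  exact hmain n hn
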